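/- Let G be a graph whose shortest odd cycle has length 5 (odd girth 5). If the edge set of G can be partitioned into the edge set of a bipartite subgraph and a matching, then G admits an orientation in which every cycle of length 5 is alternating. -/

import Mathlib

universe u

/-- An orientation of a simple graph: each edge receives exactly one of its two directions. -/
structure GraphOrientation {V : Type u} (G : SimpleGraph V) where
  dir : V → V → Prop
  adj_iff : ∀ u v, G.Adj u v ↔ (dir u v ∨ dir v u)
  asymm : ∀ u v, dir u v → ¬ dir v u

/-- The closed out-neighborhood of a vertex in an orientation. -/
def GraphOrientation.closedOutNbhd {V : Type u} {G : SimpleGraph V}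
    (D : GraphOrientation G) (v : V) : Set V :=
  insert v {u | D.dir v u}

/-- The directed local chromatic number of an oriented graph: the least `n` such that some
proper coloring of the underlying graph puts at most `n` colors on every closed
out-neighborhood. -/
noncomputable def psiD {V : Type u} {G : SimpleGraph V} (D : GraphOrientation G) : ℕ∞ :=
  sInf {n : ℕ∞ | ∃ c : V → ℕ, (∀ u w, G.Adj u w → c u ≠ c w) ∧
    ∀ v, (c '' D.closedOutNbhd v).encard ≤ n}

/-- `ψ_{d,min}`: the minimum of `ψ_d` over all orientations of `G`. -/
noncomputable def psiDMin {V : Type u} (G : SimpleGraph V) : ℕ∞ :=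
  ⨅ D : GraphOrientation G, psiD D

/-- `f : ZMod n → V` describes a cycle of length `n` in `G`. -/
def SimpleGraph.IsCycleMap {V : Type u} (G : SimpleGraph V) {n : ℕ} (f : ZMod n → V) : Prop :=
  Function.Injective f ∧ ∀ i, G.Adj (f i) (f (i + 1))

/-- The cycle described by `f` is alternating with respect to the direction relation `D`:
exactly one of its vertices is neither a source nor a sink of the cycle. -/
def IsAltCycle {V : Type u} (D : V → V → Prop) {n : ℕ} (f : ZMod n → V) : Prop :=
  ∃! i : ZMod n,
    ¬ ((D (f i) (f (i - 1)) ∧ D (f i) (f (i + 1))) ∨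
       (D (f (i - 1)) (f i) ∧ D (f (i + 1)) (f i)))

/-- The orientation `D` of `G` contains an alternating odd cycle. -/
def HasAltOddCycle {V : Type u} {G : SimpleGraph V} (D : GraphOrientation G) : Prop :=
  ∃ (n : ℕ) (f : ZMod n → V), Odd n ∧ G.IsCycleMap f ∧ IsAltCycle D.dir f

/-- The odd girth of `G`: the length of a shortest odd cycle. -/
noncomputable def oddGirth {V : Type u} (G : SimpleGraph V) : ℕ :=
  sInf {n | Odd n ∧ ∃ f : ZMod n → V, G.IsCycleMap f}

/-- The symmetric shift graph `S_m`. -/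
def shiftGraph (m : ℕ) : SimpleGraph {p : Fin m × Fin m // p.1 ≠ p.2} where
  Adj x y := x.1.2 = y.1.1 ∨ x.1.1 = y.1.2
  symm := ⟨fun _ _ h => h.elim (fun h => Or.inr h.symm) (fun h => Or.inl h.symm)⟩
  loopless := ⟨fun x h => h.elim (fun h => x.2 h.symm) (fun h => x.2 h)⟩

/-- The Kneser graph `KG(n,k)`. -/
def kneserGraph (n k : ℕ) : SimpleGraph {A : Finset (Fin n) // A.card = k} where
  Adj A B := Disjoint A.1 B.1 ∧ A ≠ B
  symm := ⟨fun _ _ h => ⟨h.1.symm, h.2.symm⟩⟩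
  loopless := ⟨fun _ h => h.2 rfl⟩

/-- A subset of `Fin n` (thought of as `[n]` arranged cyclically) is stable if it contains
no two cyclically consecutive elements. -/
def IsStableSet {n : ℕ} (A : Finset (Fin n)) : Prop :=
  ∀ i ∈ A, ∀ j ∈ A, (i.val + 1) % n ≠ j.val

/-- The Schrijver graph `SG(n,k)`. -/
def schrijverGraph (n k : ℕ) :
    SimpleGraph {A : Finset (Fin n) // A.card = k ∧ IsStableSet A} where
  Adj A B := Disjoint A.1 B.1 ∧ A ≠ B
  symm := ⟨fun _ _ h => ⟨h.1.symm, h.2.symm⟩⟩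
  loopless := ⟨fun _ h => h.2 rfl⟩

/-- The `r`-level generalized Mycielskian `M_r(G)`; `none` is the apex vertex `z`. -/
def genMycielskian {V : Type u} (G : SimpleGraph V) (r : ℕ) :
    SimpleGraph (Option (V × Fin r)) where
  Adj x y :=
    match x, y with
    | some (u, i), some (v, j) =>
        G.Adj u v ∧ (i.val + 1 = j.val ∨ j.val + 1 = i.val ∨ (i.val = 0 ∧ j.val = 0))
    | some (_, i), none => i.val = r - 1
    | none, some (_, j) => j.val = r - 1
    | none, none => False
  symm := by
    refine ⟨?_⟩
    rintro (_ | ⟨u, i⟩) (_ | ⟨v, j⟩) h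
    · exact h
    · exact h
    · exact h
    · exact ⟨h.1.symm, by tauto⟩
  loopless := by
    refine ⟨?_⟩
    rintro (_ | ⟨u, i⟩) h
    · exact h
    · exact G.irrefl h.1

lemma aux_card15 : ∀ S : Finset (ZMod 5), Odd S.card → (∀ i ∈ S, i + 1 ∉ S) → S.card = 1 := by
  decide

lemma aux_fin2 : ∀ x : Fin 2, x = 0 ∨ x = 1 := by decide

theorem statement15 {V : Type u} (G : SimpleGraph V) (hog : oddGirth G = 5)
    (B M : SimpleGraph V)
    (hpart : ∀ u v, G.Adj u v ↔ (B.Adj u v ∨ M.Adj u v))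
    (hdisj : ∀ u v, ¬ (B.Adj u v ∧ M.Adj u v))
    (hB : B.Colorable 2)
    (hM : ∀ u v w, M.Adj u v → M.Adj u w → v = w) :
    ∃ D : GraphOrientation G,
      ∀ f : ZMod 5 → V, G.IsCycleMap f → IsAltCycle D.dir f := by
  classical
  obtain ⟨c⟩ := hB
  set dir : V → V → Prop := fun u v =>
    G.Adj u v ∧ ((c u = 0 ∧ c v = 1) ∨ (c u = c v ∧ WellOrderingRel u v)) with hdirdef
  have hasymm : ∀ u v, dir u v → ¬ dir v u := by
    rintro u v ⟨hadj, h1⟩ ⟨-, h2⟩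
    rcases h1 with ⟨hu0, hv1⟩ | ⟨he, hr⟩ <;> rcases h2 with ⟨hv0, hu1⟩ | ⟨he', hr'⟩
    · rw [hv0] at hv1; exact absurd hv1 (by decide)
    · rw [he', hu0] at hv1; exact absurd hv1 (by decide)
    · rw [he, hv0] at hu1; exact absurd hu1 (by decide)
    · exact asymm hr hr'
  have htot : ∀ u v, G.Adj u v → dir u v ∨ dir v u := by
    intro u v h
    by_cases hcv : c u = c v
    · rcases trichotomous_of WellOrderingRel u v with hr | he | hr
      · exact Or.inl ⟨h, Or.inr ⟨hcv, hr⟩⟩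
      · exact absurd he (G.ne_of_adj h)
      · exact Or.inr ⟨h.symm, Or.inr ⟨hcv.symm, hr⟩⟩
    · rcases aux_fin2 (c u) with h0 | h1 <;> rcases aux_fin2 (c v) with h0' | h1'
      · exact absurd (h0.trans h0'.symm) hcv
      · exact Or.inl ⟨h, Or.inl ⟨h0, h1'⟩⟩
      · exact Or.inr ⟨h.symm, Or.inl ⟨h0', h1⟩⟩
      · exact absurd (h1.trans h1'.symm) hcv
  refine ⟨⟨dir, fun u v => ⟨fun h => htot u v h,
      fun h => h.elim (fun h => h.1) (fun h => h.1.symm)⟩, hasymm⟩, ?_⟩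
  rintro f ⟨hinj, hadjf⟩
  show ∃! i : ZMod 5,
    ¬ ((dir (f i) (f (i - 1)) ∧ dir (f i) (f (i + 1))) ∨
       (dir (f (i - 1)) (f i) ∧ dir (f (i + 1)) (f i)))
  -- the set of monochromatic edges
  set S : Finset (ZMod 5) := Finset.univ.filter (fun i => c (f i) = c (f (i + 1))) with hSdef
  -- monochromatic edges are M-edges
  have hmonoM : ∀ i : ZMod 5, c (f i) = c (f (i + 1)) → M.Adj (f i) (f (i + 1)) := by
    intro i h
    rcases (hpart _ _).mp (hadjf i) with hb | hm
    · exact absurd h (c.valid hb)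
    · exact hm
  -- no two consecutive monochromatic edges
  have hnc : ∀ i ∈ S, i + 1 ∉ S := by
    intro i hi hi1
    rw [hSdef, Finset.mem_filter] at hi hi1
    have h1 := hmonoM i hi.2
    have h2 := hmonoM (i + 1) hi1.2
    have h3 : f i = f (i + 1 + 1) := hM (f (i + 1)) (f i) (f (i + 1 + 1)) h1.symm h2
    have h4 : i = i + 1 + 1 := hinj h3
    rw [add_assoc] at h4
    have : (1 + 1 : ZMod 5) = 0 := (left_eq_add.mp h4)
    exact absurd this (by decide)
  -- parity: S.card is odd
  have hodd : Odd S.card := by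
    set d : ZMod 5 → ZMod 2 := fun i => if c (f i) = 0 then 0 else 1 with hddef
    have hsum0 : ∑ i : ZMod 5, (d (i + 1) - d i) = 0 := by
      have h : ∑ i : ZMod 5, d (i + 1) = ∑ i : ZMod 5, d i :=
        Fintype.sum_equiv (Equiv.addRight (1 : ZMod 5)) _ _ (fun i => rfl)
      rw [Finset.sum_sub_distrib, h, sub_self]
    have hterm : ∀ i : ZMod 5, d (i + 1) - d i
        = if c (f i) = c (f (i + 1)) then 0 else 1 := by
      intro i
      by_cases h : c (f i) = c (f (i + 1))
      · rw [if_pos h]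
        simp only [hddef, h, sub_self]
      · rw [if_neg h]
        rcases aux_fin2 (c (f i)) with h0 | h0 <;>
          rcases aux_fin2 (c (f (i + 1))) with h1 | h1
        · exact absurd (h0.trans h1.symm) h
        · simp only [hddef, h0, h1]; decide
        · simp only [hddef, h0, h1]; decide
        · exact absurd (h0.trans h1.symm) h
    have hcast : ((Finset.univ.filter
        (fun i : ZMod 5 => ¬ c (f i) = c (f (i + 1)))).card : ZMod 2) = 0 := by
      rw [← hsum0, Finset.sum_congr rfl (fun i _ => hterm i)]
      rw [Finset.sum_ite, Finset.sum_const, Finset.sum_const]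
      simp
    have hdvd : 2 ∣ (Finset.univ.filter
        (fun i : ZMod 5 => ¬ c (f i) = c (f (i + 1)))).card :=
      (ZMod.natCast_eq_zero_iff _ 2).mp hcast
    have hadd : S.card + (Finset.univ.filter
        (fun i : ZMod 5 => ¬ c (f i) = c (f (i + 1)))).card = 5 := by
      rw [hSdef]
      have h5 : (Finset.univ : Finset (ZMod 5)).card = 5 := by decide
      have := Finset.card_filter_add_card_filter_not
        (s := (Finset.univ : Finset (ZMod 5)))
        (p := fun i : ZMod 5 => c (f i) = c (f (i + 1)))
      rw [h5] at this
      convert this using 3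
    obtain ⟨m, hm⟩ := hdvd
    rw [Nat.odd_iff]
    omega
  have hcard1 : S.card = 1 := aux_card15 S hodd hnc
  obtain ⟨i0, hi0⟩ := Finset.card_eq_one.mp hcard1
  have hmemS : ∀ j : ZMod 5, c (f j) = c (f (j + 1)) ↔ j = i0 := by
    intro j
    constructor
    · intro h
      have : j ∈ S := by rw [hSdef, Finset.mem_filter]; exact ⟨Finset.mem_univ _, h⟩
      rw [hi0, Finset.mem_singleton] at this; exact this
    · intro h
      have : j ∈ S := by rw [h, hi0]; exact Finset.mem_singleton_self _
      rw [hSdef, Finset.mem_filter] at this; exact this.2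
  have hedge : ∀ i : ZMod 5, i ≠ i0 → c (f i) ≠ c (f (i + 1)) :=
    fun i hi h => hi ((hmemS i).mp h)
  -- bool valued direction and colouring
  set o : ZMod 5 → Bool := fun i => decide (dir (f i) (f (i + 1))) with hodef
  set b : ZMod 5 → Bool := fun i => decide (c (f i) = 0) with hbdef
  have ho_true : ∀ i : ZMod 5, o i = true ↔ dir (f i) (f (i + 1)) := by
    intro i; simp [hodef]
  have ho_false : ∀ i : ZMod 5, o i = false ↔ dir (f (i + 1)) (f i) := by
    intro i
    constructor
    · intro h
      have hnd : ¬ dir (f i) (f (i + 1)) := by simpa [hodef] using h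
      rcases htot _ _ (hadjf i) with h1 | h1
      · exact absurd h1 hnd
      · exact h1
    · intro h
      have : ¬ dir (f i) (f (i + 1)) := fun h' => hasymm _ _ h' h
      simpa [hodef] using this
  have hob : ∀ i : ZMod 5, i ≠ i0 → o i = b i := by
    intro i hi
    rcases aux_fin2 (c (f i)) with h0 | h1
    · have h1' : c (f (i + 1)) = 1 := by
        rcases aux_fin2 (c (f (i + 1))) with h | h
        · exact absurd (h0.trans h.symm) (hedge i hi)
        · exact h
      have : dir (f i) (f (i + 1)) := ⟨hadjf i, Or.inl ⟨h0, h1'⟩⟩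
      rw [(ho_true i).mpr this, hbdef]; simp [h0]
    · have h0' : c (f (i + 1)) = 0 := by
        rcases aux_fin2 (c (f (i + 1))) with h | h
        · exact h
        · exact absurd (h1.trans h.symm) (hedge i hi)
      have : dir (f (i + 1)) (f i) := ⟨(hadjf i).symm, Or.inl ⟨h0', h1⟩⟩
      rw [(ho_false i).mpr this, hbdef]; simp [h1]
  have hb_step : ∀ i : ZMod 5, i ≠ i0 → b (i + 1) = !(b i) := by
    intro i hi
    rcases aux_fin2 (c (f i)) with h0 | h1
    · have h1' : c (f (i + 1)) = 1 := by
        rcases aux_fin2 (c (f (i + 1))) with h | h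
        · exact absurd (h0.trans h.symm) (hedge i hi)
        · exact h
      simp [hbdef, h0, h1']
    · have h0' : c (f (i + 1)) = 0 := by
        rcases aux_fin2 (c (f (i + 1))) with h | h
        · exact h
        · exact absurd (h1.trans h.symm) (hedge i hi)
      simp [hbdef, h1, h0']
  have hb_mono : b (i0 + 1) = b i0 := by
    have := (hmemS i0).mpr rfl
    simp [hbdef, this]
  -- reduction of the alternation predicate to booleans
  have hPiff : ∀ j : ZMod 5,
      ((dir (f j) (f (j - 1)) ∧ dir (f j) (f (j + 1))) ∨
        (dir (f (j - 1)) (f j) ∧ dir (f (j + 1)) (f j))) ↔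
      ((o (j - 1) = false ∧ o j = true) ∨ (o (j - 1) = true ∧ o j = false)) := by
    intro j
    have hj : j - 1 + 1 = j := sub_add_cancel j 1
    have e1 : dir (f j) (f (j - 1)) ↔ o (j - 1) = false := by
      rw [ho_false (j - 1), hj]
    have e2 : dir (f (j - 1)) (f j) ↔ o (j - 1) = true := by
      rw [ho_true (j - 1), hj]
    have e3 : dir (f (j + 1)) (f j) ↔ o j = false := (ho_false j).symm
    have e4 : dir (f j) (f (j + 1)) ↔ o j = true := (ho_true j).symm
    rw [e1, e2, e3, e4]
  -- values of o around i0
  have hne10 : ∀ j : ZMod 5, j - 1 = j → False := by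
    intro j h
    have := sub_eq_self.mp h
    exact absurd this (by decide)
  have hne_add : ∀ (j : ZMod 5) (a : ZMod 5), a ≠ 0 → j + a ≠ j := by
    intro j a ha h
    exact ha (left_eq_add.mp h.symm)
  have hoi0m : o (i0 - 1) = !(b i0) := by
    have h1 : i0 - 1 ≠ i0 := fun h => hne10 i0 h
    have h2 : b (i0 - 1 + 1) = !(b (i0 - 1)) := hb_step (i0 - 1) h1
    rw [sub_add_cancel] at h2
    rw [hob (i0 - 1) h1, h2, Bool.not_not]
  have hoi0p : o (i0 + 1) = b i0 := by
    have h1 : i0 + 1 ≠ i0 := hne_add i0 1 (by decide)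
    rw [hob (i0 + 1) h1, hb_mono]
  -- the exceptional vertex
  set j0 : ZMod 5 := if o i0 = b i0 then i0 + 1 else i0 with hj0def
  have hkey : ∀ j : ZMod 5,
      (¬ ((dir (f j) (f (j - 1)) ∧ dir (f j) (f (j + 1))) ∨
        (dir (f (j - 1)) (f j) ∧ dir (f (j + 1)) (f j)))) ↔ j = j0 := by
    intro j
    rw [hPiff j]
    have hz : ∀ x : ZMod 5, x = 0 ∨ x = 1 ∨ x = 2 ∨ x = 3 ∨ x = 4 := by decide
    have hii : i0 ≠ i0 + 1 := (hne_add i0 1 (by decide)).symm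
    rcases hz (j - i0) with h | h | h | h | h
    · -- j = i0
      have hj : j = i0 := sub_eq_zero.mp h
      subst hj
      rw [hoi0m]
      by_cases htb : o j = b j
      · rw [hj0def, if_pos htb]
        refine iff_of_false (fun hn => hn ?_) (fun he => hii he)
        rw [htb]
        cases b j <;> simp
      · rw [hj0def, if_neg htb]
        refine iff_of_true (fun hn => ?_) rfl
        rcases hn with ⟨h1, h2⟩ | ⟨h1, h2⟩
        · apply htb; rw [h2]; cases hbj : b j
          · rw [hbj] at h1; simp at h1
          · rfl
        · apply htb; rw [h2]; cases hbj : b j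
          · rfl
          · rw [hbj] at h1; simp at h1
    · -- j = i0 + 1
      have hj : j = i0 + 1 := by
        have := sub_eq_iff_eq_add.mp h
        rw [this, add_comm]
      subst hj
      have hsub : i0 + 1 - 1 = i0 := by ring
      rw [hsub, hoi0p]
      by_cases htb : o i0 = b i0
      · rw [hj0def, if_pos htb, htb]
        refine iff_of_true (fun hn => ?_) rfl
        rcases hn with ⟨h1, h2⟩ | ⟨h1, h2⟩
        · rw [h1] at h2; exact absurd h2 (by simp)
        · rw [h1] at h2; exact absurd h2 (by simp)
      · rw [hj0def, if_neg htb]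
        refine iff_of_false (fun hn => hn ?_) (fun he => hii.symm ?_)
        · cases hbi : b i0 <;> cases hoi : o i0
          · rw [hbi, hoi] at htb; exact absurd rfl htb
          · right; exact ⟨rfl, rfl⟩
          · left; exact ⟨rfl, rfl⟩
          · rw [hbi, hoi] at htb; exact absurd rfl htb
        · exact he
    all_goals {
      -- generic case : j = i0 + k, k ∈ {2,3,4}
      have hj : j = i0 + (j - i0) := by ring
      have hjne : j ≠ i0 := by
        rw [hj, h]; exact hne_add i0 _ (by decide)
      have hjne1 : j - 1 ≠ i0 := by
        intro hcon
        have : j = i0 + 1 := by rw [← hcon]; ring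
        rw [this] at h
        have : (i0 + 1 - i0 : ZMod 5) = 1 := by ring
        rw [this] at h
        exact absurd h (by decide)
      have h1 : o (j - 1) = b (j - 1) := hob (j - 1) hjne1
      have h2 : o j = b j := hob j hjne
      have h3 : b (j - 1 + 1) = !(b (j - 1)) := hb_step (j - 1) hjne1
      rw [sub_add_cancel] at h3
      have hne : j ≠ j0 := by
        rw [hj0def]
        by_cases htb : o i0 = b i0
        · rw [if_pos htb]
          intro hcon
          rw [hcon] at h
          have : (i0 + 1 - i0 : ZMod 5) = 1 := by ring
          rw [this] at h
          exact absurd h (by decide)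
        · rw [if_neg htb]; exact hjne
      refine iff_of_false (fun hn => hn ?_) (fun he => hne he)
      rw [h1, h2, h3]
      cases b (j - 1) <;> simp }
  exact ⟨j0, (hkey j0).mpr rfl, fun y hy => (hkey y).mp hy⟩
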